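/- arXiv:1706.06032 — 2 statements merged into one kernel-verified Lean document; each statement's English description precedes it below -/
import Mathlib

section
/- For all m, n ≥ 1, all z ∈ ℂ and ρ ∈ ℝ, the complex Hermite polynomials satisfy the heat-type equation ∂/∂ρ J_{m,n}(z,ρ) = −(∂/∂z)(∂/∂z̄) J_{m,n}(z,ρ), where both sides equal −m·n · J_{m−1,n−1}(z,ρ). -/
open MeasureTheory ProbabilityTheory Complex Finset

/-- Itô's complex Hermite polynomial `J_{m,n}(z, ρ)`. -/
noncomputable def complexHermite (m n : ℕ) (z : ℂ) (ρ : ℝ) : ℂ :=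
  ∑ k ∈ Finset.range (min m n + 1),
    (-1 : ℂ) ^ k * (Nat.factorial k : ℂ) * (Nat.choose m k : ℂ) * (Nat.choose n k : ℂ) *
      (ρ : ℂ) ^ k * z ^ (m - k) * (starRingEnd ℂ z) ^ (n - k)

/-- Wirtinger derivative `∂f/∂z = (1/2)(∂f/∂x − i ∂f/∂y)`. -/
noncomputable def wirtingerDeriv (f : ℂ → ℂ) (z : ℂ) : ℂ :=
  (fderiv ℝ f z 1 - Complex.I * fderiv ℝ f z Complex.I) / 2

/-- Conjugate Wirtinger derivative `∂f/∂z̄ = (1/2)(∂f/∂x + i ∂f/∂y)`. -/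
noncomputable def wirtingerDerivBar (f : ℂ → ℂ) (z : ℂ) : ℂ :=
  (fderiv ℝ f z 1 + Complex.I * fderiv ℝ f z Complex.I) / 2

/-! ### Auxiliary machinery -/

/-- The real Fréchet derivative of `v ↦ v^a * conj(v)^b`. -/
noncomputable def monoCLM (a b : ℕ) (z : ℂ) : ℂ →L[ℝ] ℂ :=
  ((a:ℂ) * z^(a-1) * (starRingEnd ℂ z)^b) • (ContinuousLinearMap.id ℝ ℂ) +
  ((b:ℂ) * z^a * (starRingEnd ℂ z)^(b-1)) • (Complex.conjCLE.toContinuousLinearMap)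

lemma monoCLM_apply (a b : ℕ) (z h : ℂ) :
    monoCLM a b z h = (a:ℂ) * z^(a-1) * (starRingEnd ℂ z)^b * h
      + (b:ℂ) * z^a * (starRingEnd ℂ z)^(b-1) * (starRingEnd ℂ h) := by
  simp [monoCLM, mul_comm]

lemma mono_hasFDerivAt (a b : ℕ) (z : ℂ) :
    HasFDerivAt (fun v : ℂ => v^a * (starRingEnd ℂ v)^b) (monoCLM a b z) z := by
  have h1 : HasFDerivAt (fun v : ℂ => v^a)
      (ContinuousLinearMap.restrictScalars ℝ
        (ContinuousLinearMap.smulRight (1 : ℂ →L[ℂ] ℂ) ((a:ℂ) * z^(a-1)))) z :=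
    ((hasDerivAt_pow a z).hasFDerivAt).restrictScalars ℝ
  have hconj : HasFDerivAt (fun v : ℂ => starRingEnd ℂ v)
      (Complex.conjCLE.toContinuousLinearMap) z :=
    Complex.conjCLE.toContinuousLinearMap.hasFDerivAt
  have h2 : HasFDerivAt (fun v : ℂ => (starRingEnd ℂ v)^b)
      ((ContinuousLinearMap.restrictScalars ℝ
        (ContinuousLinearMap.smulRight (1 : ℂ →L[ℂ] ℂ) ((b:ℂ) * (starRingEnd ℂ z)^(b-1)))).comp
        Complex.conjCLE.toContinuousLinearMap) z :=
    (((hasDerivAt_pow b (starRingEnd ℂ z)).hasFDerivAt).restrictScalars ℝ).comp z hconj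
  have := h1.mul' h2
  refine this.congr_fderiv ?_
  ext h
  simp [monoCLM]
  ring

lemma sum_mono_hasFDerivAt (s : Finset ℕ) (c : ℕ → ℂ) (e1 e2 : ℕ → ℕ) (z : ℂ) :
    HasFDerivAt (fun v : ℂ => ∑ k ∈ s, c k * (v ^ e1 k * (starRingEnd ℂ v) ^ e2 k))
      (∑ k ∈ s, c k • monoCLM (e1 k) (e2 k) z) z :=
  HasFDerivAt.fun_sum fun k _ => (mono_hasFDerivAt (e1 k) (e2 k) z).const_mul (c k)

lemma wirtBar_sum (s : Finset ℕ) (c : ℕ → ℂ) (e1 e2 : ℕ → ℕ) (z : ℂ) :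
    wirtingerDerivBar (fun v : ℂ => ∑ k ∈ s, c k * (v ^ e1 k * (starRingEnd ℂ v) ^ e2 k)) z
      = ∑ k ∈ s, c k * ((e2 k : ℂ) * z ^ e1 k * (starRingEnd ℂ z) ^ (e2 k - 1)) := by
  rw [wirtingerDerivBar, (sum_mono_hasFDerivAt s c e1 e2 z).fderiv]
  simp only [ContinuousLinearMap.coe_sum', Finset.sum_apply, ContinuousLinearMap.coe_smul',
    Pi.smul_apply, smul_eq_mul]
  rw [Finset.mul_sum, ← Finset.sum_add_distrib, Finset.sum_div]
  refine Finset.sum_congr rfl fun k _ => ?_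
  rw [monoCLM_apply, monoCLM_apply]
  simp only [map_one, Complex.conj_I]
  field_simp
  ring_nf
  rw [Complex.I_sq]
  ring

lemma wirt_sum (s : Finset ℕ) (c : ℕ → ℂ) (e1 e2 : ℕ → ℕ) (z : ℂ) :
    wirtingerDeriv (fun v : ℂ => ∑ k ∈ s, c k * (v ^ e1 k * (starRingEnd ℂ v) ^ e2 k)) z
      = ∑ k ∈ s, c k * ((e1 k : ℂ) * z ^ (e1 k - 1) * (starRingEnd ℂ z) ^ e2 k) := by
  rw [wirtingerDeriv, (sum_mono_hasFDerivAt s c e1 e2 z).fderiv]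
  simp only [ContinuousLinearMap.coe_sum', Finset.sum_apply, ContinuousLinearMap.coe_smul',
    Pi.smul_apply, smul_eq_mul]
  rw [Finset.mul_sum, ← Finset.sum_sub_distrib, Finset.sum_div]
  refine Finset.sum_congr rfl fun k _ => ?_
  rw [monoCLM_apply, monoCLM_apply]
  simp only [map_one, Complex.conj_I]
  field_simp
  ring_nf
  rw [Complex.I_sq]
  ring

/-- The `ρ`-independent coefficient of `complexHermite`. -/
noncomputable def hermC (m n k : ℕ) (ρ : ℝ) : ℂ :=
  (-1 : ℂ) ^ k * (Nat.factorial k : ℂ) * (Nat.choose m k : ℂ) * (Nat.choose n k : ℂ) * (ρ : ℂ) ^ k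

lemma hermite_fun_eq (m n : ℕ) (ρ : ℝ) :
    (fun v : ℂ => complexHermite m n v ρ)
      = fun v : ℂ => ∑ k ∈ Finset.range (min m n + 1),
          hermC m n k ρ * (v ^ (m - k) * (starRingEnd ℂ v) ^ (n - k)) := by
  funext v
  refine Finset.sum_congr rfl fun k _ => ?_
  simp [hermC]; ring

lemma deriv_rho (m n : ℕ) (z : ℂ) (ρ : ℝ) :
    deriv (fun r : ℝ => complexHermite m n z r) ρ
      = ∑ k ∈ Finset.range (min m n + 1),
          (-1 : ℂ) ^ k * (Nat.factorial k : ℂ) * (Nat.choose m k : ℂ) * (Nat.choose n k : ℂ) *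
            ((k : ℂ) * (ρ : ℂ) ^ (k - 1)) * z ^ (m - k) * (starRingEnd ℂ z) ^ (n - k) := by
  refine HasDerivAt.deriv ?_
  unfold complexHermite
  refine HasDerivAt.fun_sum fun k _ => ?_
  have h := ((hasDerivAt_pow k ((ρ : ℝ) : ℂ)).comp_ofReal).const_mul
    ((-1 : ℂ) ^ k * (Nat.factorial k : ℂ) * (Nat.choose m k : ℂ) * (Nat.choose n k : ℂ))
  exact (h.mul_const (z ^ (m - k))).mul_const ((starRingEnd ℂ z) ^ (n - k))

lemma rho_part (m n : ℕ) (hm : 1 ≤ m) (hn : 1 ≤ n) (z : ℂ) (ρ : ℝ) :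
    (∑ k ∈ Finset.range (min m n + 1),
        (-1 : ℂ) ^ k * (Nat.factorial k : ℂ) * (Nat.choose m k : ℂ) * (Nat.choose n k : ℂ) *
          ((k : ℂ) * (ρ : ℂ) ^ (k - 1)) * z ^ (m - k) * (starRingEnd ℂ z) ^ (n - k))
      = -((m : ℂ) * (n : ℂ)) * complexHermite (m - 1) (n - 1) z ρ := by
  have hN : min (m - 1) (n - 1) + 1 = min m n := by omega
  rw [complexHermite, hN, Finset.mul_sum, Finset.sum_range_succ']
  simp only [Nat.cast_zero, zero_mul, mul_zero, zero_mul, add_zero]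
  refine Finset.sum_congr rfl fun k hk => ?_
  have he1 : m - (k + 1) = m - 1 - k := by omega
  have he2 : n - (k + 1) = n - 1 - k := by omega
  rw [he1, he2]
  have h1 : ((Nat.choose m (k + 1) : ℂ)) * ((k : ℂ) + 1) = (m : ℂ) * (Nat.choose (m - 1) k : ℂ) := by
    have := Nat.add_one_mul_choose_eq (m - 1) k
    rw [Nat.sub_add_cancel hm] at this
    exact_mod_cast this.symm
  have h2 : ((Nat.choose n (k + 1) : ℂ)) * ((k : ℂ) + 1) = (n : ℂ) * (Nat.choose (n - 1) k : ℂ) := by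
    have := Nat.add_one_mul_choose_eq (n - 1) k
    rw [Nat.sub_add_cancel hn] at this
    exact_mod_cast this.symm
  have h3 : ((Nat.factorial (k + 1) : ℂ)) = ((k : ℂ) + 1) * (Nat.factorial k : ℂ) := by
    rw [Nat.factorial_succ]; push_cast; ring
  have hcoef : ((Nat.factorial (k+1) : ℂ)) * (Nat.choose m (k+1) : ℂ) * (Nat.choose n (k+1) : ℂ) * ((k:ℂ)+1)
      = (Nat.factorial k : ℂ) * ((m:ℂ) * (Nat.choose (m-1) k : ℂ)) * ((n:ℂ) * (Nat.choose (n-1) k : ℂ)) := by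
    calc ((Nat.factorial (k+1) : ℂ)) * (Nat.choose m (k+1) : ℂ) * (Nat.choose n (k+1) : ℂ) * ((k:ℂ)+1)
        = (Nat.factorial k : ℂ) * ((Nat.choose m (k+1) : ℂ) * ((k:ℂ)+1))
            * ((Nat.choose n (k+1) : ℂ) * ((k:ℂ)+1)) := by rw [h3]; ring
      _ = _ := by rw [h1, h2]
  push_cast
  simp only [pow_succ]
  linear_combination ((-1:ℂ)^k * (-1) * (ρ:ℂ)^k * z^(m-1-k) * (starRingEnd ℂ z)^(n-1-k)) * hcoef

lemma wirt_part (m n : ℕ) (hm : 1 ≤ m) (hn : 1 ≤ n) (z : ℂ) (ρ : ℝ) :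
    (∑ k ∈ Finset.range (min m n + 1),
        (hermC m n k ρ * ((n - k : ℕ) : ℂ)) *
          (((m - k : ℕ) : ℂ) * z ^ (m - k - 1) * (starRingEnd ℂ z) ^ (n - k - 1)))
      = ((m : ℂ) * (n : ℂ)) * complexHermite (m - 1) (n - 1) z ρ := by
  have hN : min (m - 1) (n - 1) + 1 = min m n := by omega
  rw [complexHermite, hN, Finset.mul_sum, Finset.sum_range_succ]
  have h0 : m - min m n = 0 ∨ n - min m n = 0 := by omega
  have hlast : (hermC m n (min m n) ρ * ((n - min m n : ℕ) : ℂ)) *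
      (((m - min m n : ℕ) : ℂ) * z ^ (m - min m n - 1) * (starRingEnd ℂ z) ^ (n - min m n - 1)) = 0 := by
    rcases h0 with h | h <;> rw [h] <;> simp
  rw [hlast, add_zero]
  refine Finset.sum_congr rfl fun k hk => ?_
  have hkN : k < min m n := Finset.mem_range.mp hk
  have he1 : m - k - 1 = m - 1 - k := by omega
  have he2 : n - k - 1 = n - 1 - k := by omega
  rw [he1, he2]
  have h1 : (Nat.choose (m - 1) k : ℂ) * (m : ℂ) = (Nat.choose m k : ℂ) * ((m - k : ℕ) : ℂ) := by
    have := Nat.choose_mul_succ_eq (m - 1) k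
    rw [Nat.sub_add_cancel hm] at this
    exact_mod_cast this
  have h2 : (Nat.choose (n - 1) k : ℂ) * (n : ℂ) = (Nat.choose n k : ℂ) * ((n - k : ℕ) : ℂ) := by
    have := Nat.choose_mul_succ_eq (n - 1) k
    rw [Nat.sub_add_cancel hn] at this
    exact_mod_cast this
  rw [hermC]
  linear_combination (-((-1:ℂ)^k * (Nat.factorial k : ℂ) * (ρ:ℂ)^k * z^(m-1-k)
      * (starRingEnd ℂ z)^(n-1-k))) *
    ((Nat.choose n k : ℂ) * ((n - k : ℕ) : ℂ) * h1 + (Nat.choose (m-1) k : ℂ) * (m:ℂ) * h2)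

/-- Heat-type equation: for `m, n ≥ 1`,
`∂/∂ρ J_{m,n} = −(∂/∂z)(∂/∂z̄) J_{m,n}`, both sides being `−m·n·J_{m-1,n-1}`. -/
theorem complexHermite_heat_equation (m n : ℕ) (hm : 1 ≤ m) (hn : 1 ≤ n) (z : ℂ) (ρ : ℝ) :
    deriv (fun r : ℝ => complexHermite m n z r) ρ
      = -(wirtingerDeriv (fun w => wirtingerDerivBar (fun v => complexHermite m n v ρ) w) z) ∧
    deriv (fun r : ℝ => complexHermite m n z r) ρ
      = -((m : ℂ) * (n : ℂ)) * complexHermite (m - 1) (n - 1) z ρ := by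
  have hrho : deriv (fun r : ℝ => complexHermite m n z r) ρ
      = -((m : ℂ) * (n : ℂ)) * complexHermite (m - 1) (n - 1) z ρ := by
    rw [deriv_rho, rho_part m n hm hn]
  refine ⟨?_, hrho⟩
  rw [hrho]
  have hbar : (fun w => wirtingerDerivBar (fun v => complexHermite m n v ρ) w)
      = fun w : ℂ => ∑ k ∈ Finset.range (min m n + 1),
          (hermC m n k ρ * ((n - k : ℕ) : ℂ)) * (w ^ (m - k) * (starRingEnd ℂ w) ^ (n - k - 1)) := by
    funext w
    rw [hermite_fun_eq, wirtBar_sum]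
    exact Finset.sum_congr rfl fun k _ => by ring
  rw [hbar, wirt_sum, wirt_part m n hm hn]
  ring
end

section
/- For all m, n ∈ ℕ, all z ∈ ℂ and ρ ∈ ℝ, the complex Hermite polynomial J_{m,n}(·,ρ) satisfies conj(z) · (∂/∂z̄) J_{m,n}(z,ρ) − ρ · (∂/∂z)(∂/∂z̄) J_{m,n}(z,ρ) = n · J_{m,n}(z,ρ). -/
open MeasureTheory ProbabilityTheory Complex Finset

noncomputable def monoD (a b : ℕ) (z : ℂ) : ℂ →L[ℝ] ℂ :=
  ((a : ℂ) * z ^ (a - 1) * (starRingEnd ℂ z) ^ b) • (ContinuousLinearMap.id ℝ ℂ) +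
    ((b : ℂ) * z ^ a * (starRingEnd ℂ z) ^ (b - 1)) • (Complex.conjCLE : ℂ →L[ℝ] ℂ)

lemma monoD_apply (a b : ℕ) (z v : ℂ) :
    monoD a b z v = (a : ℂ) * z ^ (a - 1) * (starRingEnd ℂ z) ^ b * v +
      (b : ℂ) * z ^ a * (starRingEnd ℂ z) ^ (b - 1) * (starRingEnd ℂ v) := by
  simp [monoD, smul_eq_mul]

lemma hasFDerivAt_mono (a b : ℕ) (z : ℂ) :
    HasFDerivAt (fun w : ℂ => w ^ a * (starRingEnd ℂ w) ^ b) (monoD a b z) z := by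
  have h1 : HasFDerivAt (fun w : ℂ => w ^ a)
      (ContinuousLinearMap.restrictScalars ℝ
        (ContinuousLinearMap.smulRight (1 : ℂ →L[ℂ] ℂ) ((a : ℂ) * z ^ (a - 1)))) z :=
    (hasDerivAt_pow a z).hasFDerivAt.restrictScalars ℝ
  have h2 : HasFDerivAt (fun w : ℂ => (starRingEnd ℂ w) ^ b)
      ((ContinuousLinearMap.restrictScalars ℝ
        (ContinuousLinearMap.smulRight (1 : ℂ →L[ℂ] ℂ)
          ((b : ℂ) * (starRingEnd ℂ z) ^ (b - 1)))).comp
        (Complex.conjCLE : ℂ →L[ℝ] ℂ)) z := by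
    have := ((hasDerivAt_pow b (starRingEnd ℂ z)).hasFDerivAt.restrictScalars ℝ).comp z
      (Complex.conjCLE : ℂ →L[ℝ] ℂ).hasFDerivAt
    exact this
  have := h1.mul h2
  refine this.congr_fderiv ?_
  ext v
  simp [monoD, smul_eq_mul]
  ring

lemma hasFDerivAt_sumMono (s : Finset ℕ) (c : ℕ → ℂ) (p q : ℕ → ℕ) (z : ℂ) :
    HasFDerivAt (fun w : ℂ => ∑ k ∈ s, c k * (w ^ p k * (starRingEnd ℂ w) ^ q k))
      (∑ k ∈ s, c k • monoD (p k) (q k) z) z :=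
  HasFDerivAt.fun_sum fun k _ => (hasFDerivAt_mono (p k) (q k) z).const_mul (c k)

lemma wirtingerDeriv_sumMono (s : Finset ℕ) (c : ℕ → ℂ) (p q : ℕ → ℕ) (z : ℂ) :
    wirtingerDeriv (fun w : ℂ => ∑ k ∈ s, c k * (w ^ p k * (starRingEnd ℂ w) ^ q k)) z
      = ∑ k ∈ s, c k * ((p k : ℂ) * z ^ (p k - 1) * (starRingEnd ℂ z) ^ q k) := by
  unfold wirtingerDeriv
  rw [(hasFDerivAt_sumMono s c p q z).fderiv]
  rw [ContinuousLinearMap.sum_apply, ContinuousLinearMap.sum_apply, Finset.mul_sum,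
    ← Finset.sum_sub_distrib, Finset.sum_div]
  refine Finset.sum_congr rfl fun k _ => ?_
  simp only [ContinuousLinearMap.smul_apply, smul_eq_mul, monoD_apply, Complex.conj_I, map_one,
    mul_one]
  linear_combination (c k * ((q k : ℂ) * z ^ p k * (starRingEnd ℂ z) ^ (q k - 1)
    - (p k : ℂ) * z ^ (p k - 1) * (starRingEnd ℂ z) ^ q k) / 2) * Complex.I_sq

lemma wirtingerDerivBar_sumMono (s : Finset ℕ) (c : ℕ → ℂ) (p q : ℕ → ℕ) (z : ℂ) :
    wirtingerDerivBar (fun w : ℂ => ∑ k ∈ s, c k * (w ^ p k * (starRingEnd ℂ w) ^ q k)) z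
      = ∑ k ∈ s, c k * ((q k : ℂ) * z ^ p k * (starRingEnd ℂ z) ^ (q k - 1)) := by
  unfold wirtingerDerivBar
  rw [(hasFDerivAt_sumMono s c p q z).fderiv]
  rw [ContinuousLinearMap.sum_apply, ContinuousLinearMap.sum_apply, Finset.mul_sum,
    ← Finset.sum_add_distrib, Finset.sum_div]
  refine Finset.sum_congr rfl fun k _ => ?_
  simp only [ContinuousLinearMap.smul_apply, smul_eq_mul, monoD_apply, Complex.conj_I, map_one,
    mul_one]
  linear_combination (c k * ((p k : ℂ) * z ^ (p k - 1) * (starRingEnd ℂ z) ^ q k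
    - (q k : ℂ) * z ^ p k * (starRingEnd ℂ z) ^ (q k - 1)) / 2) * Complex.I_sq

/-- Eigenfunction property for the conjugate complex Ornstein–Uhlenbeck operator:
`conj z·∂_z̄ J_{m,n} − ρ·∂_z ∂_z̄ J_{m,n} = n·J_{m,n}`. -/
theorem complexHermite_conj_OU_eigenfunction (m n : ℕ) (z : ℂ) (ρ : ℝ) :
    (starRingEnd ℂ z) * wirtingerDerivBar (fun w => complexHermite m n w ρ) z
      - (ρ : ℂ) * wirtingerDeriv (fun w => wirtingerDerivBar (fun v => complexHermite m n v ρ) w) z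
      = (n : ℂ) * complexHermite m n z ρ := by
  set M := min m n with hM
  set C : ℕ → ℂ := fun k =>
    (-1 : ℂ) ^ k * (Nat.factorial k : ℂ) * (Nat.choose m k : ℂ) * (Nat.choose n k : ℂ) *
      (ρ : ℂ) ^ k with hC
  have hfun : (fun w => complexHermite m n w ρ) =
      fun w : ℂ => ∑ k ∈ Finset.range (M + 1),
        C k * (w ^ (m - k) * (starRingEnd ℂ w) ^ (n - k)) := by
    funext w
    unfold complexHermite
    exact Finset.sum_congr rfl fun k _ => by rw [hC]; ring
  have hbar : ∀ w : ℂ, wirtingerDerivBar (fun v => complexHermite m n v ρ) w =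
      ∑ k ∈ Finset.range (M + 1),
        (C k * ((n - k : ℕ) : ℂ)) * (w ^ (m - k) * (starRingEnd ℂ w) ^ (n - k - 1)) := by
    intro w
    rw [hfun, wirtingerDerivBar_sumMono]
    exact Finset.sum_congr rfl fun k _ => by ring
  rw [hbar z]
  have hbar' : (fun w => wirtingerDerivBar (fun v => complexHermite m n v ρ) w) =
      fun w : ℂ => ∑ k ∈ Finset.range (M + 1),
        (C k * ((n - k : ℕ) : ℂ)) * (w ^ (m - k) * (starRingEnd ℂ w) ^ (n - k - 1)) :=
    funext hbar
  rw [hbar', wirtingerDeriv_sumMono]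
  -- Now pure algebra
  unfold complexHermite
  rw [Finset.mul_sum, Finset.mul_sum, Finset.mul_sum, ← hM]
  have claim1 : ∀ k ∈ Finset.range (M + 1),
      (starRingEnd ℂ) z * (C k * ((n - k : ℕ) : ℂ) * (z ^ (m - k) * (starRingEnd ℂ) z ^ (n - k - 1)))
        = -(k : ℂ) * C k * (z ^ (m - k) * (starRingEnd ℂ) z ^ (n - k))
          + (n : ℂ) * ((-1 : ℂ) ^ k * (Nat.factorial k : ℂ) * (Nat.choose m k : ℂ) *
              (Nat.choose n k : ℂ) * (ρ : ℂ) ^ k * z ^ (m - k) * (starRingEnd ℂ) z ^ (n - k)) := by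
    intro k hk
    have hkM : k ≤ M := Nat.lt_succ_iff.mp (Finset.mem_range.mp hk)
    have hkn : k ≤ n := le_trans hkM (hM ▸ min_le_right m n)
    rcases Nat.lt_or_ge k n with h | h
    · have hp : ((starRingEnd ℂ) z) ^ (n - k) = ((starRingEnd ℂ) z) ^ (n - k - 1) * (starRingEnd ℂ) z := by
        rw [← pow_succ]
        congr 1
        omega
      rw [hp, hC]
      push_cast [Nat.cast_sub hkn]
      ring
    · have hk' : k = n := le_antisymm hkn h
      have h0 : n - k = 0 := by omega
      rw [h0, hC]
      subst hk'
      push_cast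
      ring
  rw [Finset.sum_congr rfl claim1, Finset.sum_add_distrib]
  have key : ∑ k ∈ Finset.range (M + 1),
        (-(k : ℂ) * C k * (z ^ (m - k) * (starRingEnd ℂ) z ^ (n - k)))
      = ∑ k ∈ Finset.range (M + 1),
        (ρ : ℂ) * (C k * ((n - k : ℕ) : ℂ) *
          (((m - k : ℕ) : ℂ) * z ^ (m - k - 1) * (starRingEnd ℂ) z ^ (n - k - 1))) := by
    rw [Finset.sum_range_succ'
      (fun k => -(k : ℂ) * C k * (z ^ (m - k) * (starRingEnd ℂ) z ^ (n - k))) M,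
      Finset.sum_range_succ]
    have hyM : (ρ : ℂ) * (C M * ((n - M : ℕ) : ℂ) *
        (((m - M : ℕ) : ℂ) * z ^ (m - M - 1) * (starRingEnd ℂ) z ^ (n - M - 1))) = 0 := by
      have h0 : (n - M) * (m - M) = 0 := by
        rw [hM]
        rcases le_total m n with h | h
        · simp [min_eq_left h, Nat.sub_self]
        · simp [min_eq_right h, Nat.sub_self]
      rcases Nat.mul_eq_zero.mp h0 with h | h <;> simp [h]
    rw [hyM]
    simp only [Nat.cast_zero, neg_zero, zero_mul, add_zero]
    refine Finset.sum_congr rfl fun k hk => ?_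
    have hkM : k < M := Finset.mem_range.mp hk
    have hkm : k + 1 ≤ m := by omega
    have hkn : k + 1 ≤ n := by omega
    have e1 : ((Nat.choose m (k + 1) : ℂ)) * ((k : ℂ) + 1)
        = (Nat.choose m k : ℂ) * (((m - k : ℕ)) : ℂ) := by
      exact_mod_cast congrArg (Nat.cast (R := ℂ)) (Nat.choose_succ_right_eq m k)
    have e2 : ((Nat.choose n (k + 1) : ℂ)) * ((k : ℂ) + 1)
        = (Nat.choose n k : ℂ) * (((n - k : ℕ)) : ℂ) := by
      exact_mod_cast congrArg (Nat.cast (R := ℂ)) (Nat.choose_succ_right_eq n k)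
    rw [hC, Nat.sub_sub m k 1, Nat.sub_sub n k 1]
    push_cast [Nat.factorial_succ]
    linear_combination
      (((-1 : ℂ) ^ k * (Nat.factorial k : ℂ) * (ρ : ℂ) ^ (k + 1) *
          (z ^ (m - (k + 1)) * (starRingEnd ℂ) z ^ (n - (k + 1)))) *
        (((Nat.choose n (k + 1) : ℂ) * ((k : ℂ) + 1)) * e1
          + ((Nat.choose m k : ℂ) * (((m - k : ℕ)) : ℂ)) * e2))
  linear_combination key
end
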